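/- Let μ ∈ {−1,1}, let I ⊆ ℝ be an open interval containing 0, let ψ_0 : I → ℂ and A_0 : I → ℝ be continuous, and let s, v, w : I → ℝ³ be differentiable maps satisfying for all t ∈ I the ODE system: s'(t) = Re(ψ_0(t)) v(t) + Im(ψ_0(t)) w(t), v'(t) = −μ Re(ψ_0(t)) s(t) + A_0(t) w(t), w'(t) = −μ Im(ψ_0(t)) s(t) − A_0(t) v(t). If at t = 0 one has v ·_μ s = 0, w ·_μ s = 0, v ·_μ w = 0, μ (s ·_μ s) = 1, v ·_μ v = 1, and w ·_μ w = 1, then these six identities hold for all t ∈ I. -/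

import Mathlib

noncomputable section

/-- The inner product `v ·_μ w = μ v₀ w₀ + v₁ w₁ + v₂ w₂` on `ℝ³`. -/
def mdot (μ : ℝ) (v w : Fin 3 → ℝ) : ℝ :=
  μ * v 0 * w 0 + v 1 * w 1 + v 2 * w 2

/-- The standard cross product on `ℝ³`. -/
def cross3 (v w : Fin 3 → ℝ) : Fin 3 → ℝ :=
  ![v 1 * w 2 - v 2 * w 1, v 2 * w 0 - v 0 * w 2, v 0 * w 1 - v 1 * w 0]

/-- The cross product `v ×_μ w = η_μ · (v × w)`, where `η_μ = diag(μ,1,1)`. -/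
def mcross (μ : ℝ) (v w : Fin 3 → ℝ) : Fin 3 → ℝ :=
  ![μ * cross3 v w 0, cross3 v w 1, cross3 v w 2]

open Set

private lemma mdot_hasDerivAt {μ : ℝ} {x y : ℝ → Fin 3 → ℝ} {x' y' : Fin 3 → ℝ} {t : ℝ}
    (hx : HasDerivAt x x' t) (hy : HasDerivAt y y' t) :
    HasDerivAt (fun u => mdot μ (x u) (y u))
      (mdot μ x' (y t) + mdot μ (x t) y') t := by
  have h0x := hasDerivAt_pi.1 hx 0
  have h1x := hasDerivAt_pi.1 hx 1
  have h2x := hasDerivAt_pi.1 hx 2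
  have h0y := hasDerivAt_pi.1 hy 0
  have h1y := hasDerivAt_pi.1 hy 1
  have h2y := hasDerivAt_pi.1 hy 2
  have H := ((h0x.const_mul μ).mul h0y).add ((h1x.mul h1y).add (h2x.mul h2y))
  have hfun : (fun u => mdot μ (x u) (y u)) =
      fun u => μ * x u 0 * y u 0 + (x u 1 * y u 1 + x u 2 * y u 2) := by
    funext u; simp [mdot]; ring
  rw [hfun]
  exact H.congr_deriv (by simp [mdot]; ring)

private lemma abs_mul_le' {a x C N : ℝ} (ha : |a| ≤ C) (hx : |x| ≤ N) : |a * x| ≤ C * N := by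
  rw [abs_mul]
  exact mul_le_mul ha hx (abs_nonneg _) ((abs_nonneg a).trans ha)

theorem stmt15 (μ : ℝ) (hμ : μ = 1 ∨ μ = -1)
    (I : Set ℝ) (hIopen : IsOpen I) (hIconv : Convex ℝ I) (h0I : (0 : ℝ) ∈ I)
    (ψ0 : ℝ → ℂ) (hψ0 : ContinuousOn ψ0 I)
    (A0 : ℝ → ℝ) (hA0 : ContinuousOn A0 I)
    (s v w : ℝ → (Fin 3 → ℝ))
    (hs : ∀ t ∈ I, HasDerivAt s ((ψ0 t).re • v t + (ψ0 t).im • w t) t)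
    (hv : ∀ t ∈ I, HasDerivAt v ((-(μ * (ψ0 t).re)) • s t + A0 t • w t) t)
    (hw : ∀ t ∈ I, HasDerivAt w ((-(μ * (ψ0 t).im)) • s t + (-(A0 t)) • v t) t)
    (hvs0 : mdot μ (v 0) (s 0) = 0)
    (hws0 : mdot μ (w 0) (s 0) = 0)
    (hvw0 : mdot μ (v 0) (w 0) = 0)
    (hss0 : μ * mdot μ (s 0) (s 0) = 1)
    (hvv0 : mdot μ (v 0) (v 0) = 1)
    (hww0 : mdot μ (w 0) (w 0) = 1) :
    ∀ t ∈ I,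
      mdot μ (v t) (s t) = 0 ∧ mdot μ (w t) (s t) = 0 ∧ mdot μ (v t) (w t) = 0 ∧
      μ * mdot μ (s t) (s t) = 1 ∧ mdot μ (v t) (v t) = 1 ∧
      mdot μ (w t) (w t) = 1 := by
  have hμabs : |μ| = 1 := by rcases hμ with h | h <;> simp [h]
  set F : ℝ → Fin 6 → ℝ := fun u =>
    ![mdot μ (v u) (s u), mdot μ (w u) (s u), mdot μ (v u) (w u),
      μ * mdot μ (s u) (s u) - 1, mdot μ (v u) (v u) - 1, mdot μ (w u) (w u) - 1] with hFdef
  set G : ℝ → Fin 6 → ℝ := fun u =>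
    ![(ψ0 u).re * (F u 4 - F u 3) + (ψ0 u).im * F u 2 + A0 u * F u 1,
      (ψ0 u).im * (F u 5 - F u 3) + (ψ0 u).re * F u 2 - A0 u * F u 0,
      -(μ * (ψ0 u).re) * F u 1 - (μ * (ψ0 u).im) * F u 0 + A0 u * (F u 5 - F u 4),
      2 * μ * ((ψ0 u).re * F u 0 + (ψ0 u).im * F u 1),
      2 * (-(μ * (ψ0 u).re) * F u 0 + A0 u * F u 2),
      2 * (-(μ * (ψ0 u).im) * F u 1 - A0 u * F u 2)] with hGdef
  have hF : ∀ u ∈ I, HasDerivAt F (G u) u := by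
    intro u hu
    have hds := hs u hu
    have hdv := hv u hu
    have hdw := hw u hu
    have D0 : HasDerivAt (fun x => mdot μ (v x) (s x))
        ((ψ0 u).re * ((mdot μ (v u) (v u) - 1) - (μ * mdot μ (s u) (s u) - 1)) +
          (ψ0 u).im * mdot μ (v u) (w u) + A0 u * mdot μ (w u) (s u)) u :=
      (mdot_hasDerivAt (μ := μ) hdv hds).congr_deriv (by
        rcases hμ with h | h <;> subst h <;>
          simp only [mdot, Pi.add_apply, Pi.smul_apply, smul_eq_mul] <;> ring)
    have D1 : HasDerivAt (fun x => mdot μ (w x) (s x))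
        ((ψ0 u).im * ((mdot μ (w u) (w u) - 1) - (μ * mdot μ (s u) (s u) - 1)) +
          (ψ0 u).re * mdot μ (v u) (w u) - A0 u * mdot μ (v u) (s u)) u :=
      (mdot_hasDerivAt (μ := μ) hdw hds).congr_deriv (by
        rcases hμ with h | h <;> subst h <;>
          simp only [mdot, Pi.add_apply, Pi.smul_apply, smul_eq_mul] <;> ring)
    have D2 : HasDerivAt (fun x => mdot μ (v x) (w x))
        (-(μ * (ψ0 u).re) * mdot μ (w u) (s u) - (μ * (ψ0 u).im) * mdot μ (v u) (s u) +
          A0 u * ((mdot μ (w u) (w u) - 1) - (mdot μ (v u) (v u) - 1))) u :=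
      (mdot_hasDerivAt (μ := μ) hdv hdw).congr_deriv (by
        rcases hμ with h | h <;> subst h <;>
          simp only [mdot, Pi.add_apply, Pi.smul_apply, smul_eq_mul] <;> ring)
    have D3 : HasDerivAt (fun x => μ * mdot μ (s x) (s x) - 1)
        (2 * μ * ((ψ0 u).re * mdot μ (v u) (s u) + (ψ0 u).im * mdot μ (w u) (s u))) u :=
      (((mdot_hasDerivAt (μ := μ) hds hds).const_mul μ).sub_const 1).congr_deriv (by
        rcases hμ with h | h <;> subst h <;>
          simp only [mdot, Pi.add_apply, Pi.smul_apply, smul_eq_mul] <;> ring)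
    have D4 : HasDerivAt (fun x => mdot μ (v x) (v x) - 1)
        (2 * (-(μ * (ψ0 u).re) * mdot μ (v u) (s u) + A0 u * mdot μ (v u) (w u))) u :=
      ((mdot_hasDerivAt (μ := μ) hdv hdv).sub_const 1).congr_deriv (by
        rcases hμ with h | h <;> subst h <;>
          simp only [mdot, Pi.add_apply, Pi.smul_apply, smul_eq_mul] <;> ring)
    have D5 : HasDerivAt (fun x => mdot μ (w x) (w x) - 1)
        (2 * (-(μ * (ψ0 u).im) * mdot μ (w u) (s u) - A0 u * mdot μ (v u) (w u))) u :=
      ((mdot_hasDerivAt (μ := μ) hdw hdw).sub_const 1).congr_deriv (by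
        rcases hμ with h | h <;> subst h <;>
          simp only [mdot, Pi.add_apply, Pi.smul_apply, smul_eq_mul] <;> ring)
    apply hasDerivAt_pi.2
    intro i
    fin_cases i
    · exact D0
    · exact D1
    · exact D2
    · exact D3
    · exact D4
    · exact D5
  have hFcont : ContinuousOn F I := fun u hu => ((hF u hu).continuousAt).continuousWithinAt
  have hF0 : F 0 = 0 := by
    funext i
    fin_cases i
    · exact hvs0
    · exact hws0
    · exact hvw0
    · exact sub_eq_zero.2 hss0
    · exact sub_eq_zero.2 hvv0
    · exact sub_eq_zero.2 hww0
  have keybound : ∀ (J : Set ℝ), IsCompact J → J ⊆ I →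
      ∃ K : ℝ, 0 ≤ K ∧ ∀ x ∈ J, ‖G x‖ ≤ K * ‖F x‖ := by
    intro J hJc hJI
    obtain ⟨C1, hC1⟩ := hJc.exists_bound_of_continuousOn (hψ0.mono hJI)
    obtain ⟨C2, hC2⟩ := hJc.exists_bound_of_continuousOn (hA0.mono hJI)
    set C : ℝ := max (max C1 C2) 0 with hCdef
    have hC0 : (0 : ℝ) ≤ C := le_max_right _ _
    refine ⟨4 * C, by linarith, ?_⟩
    intro x hx
    have hp : |(ψ0 x).re| ≤ C :=
      (Complex.abs_re_le_norm _).trans ((hC1 x hx).trans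
        ((le_max_left C1 C2).trans (le_max_left _ _)))
    have hq : |(ψ0 x).im| ≤ C :=
      (Complex.abs_im_le_norm _).trans ((hC1 x hx).trans
        ((le_max_left C1 C2).trans (le_max_left _ _)))
    have hA : |A0 x| ≤ C := by
      have h2 := hC2 x hx
      rw [Real.norm_eq_abs] at h2
      exact h2.trans ((le_max_right C1 C2).trans (le_max_left _ _))
    have hμp : |(-(μ * (ψ0 x).re))| ≤ C := by
      rw [abs_neg, abs_mul, hμabs, one_mul]; exact hp
    have hμq : |(-(μ * (ψ0 x).im))| ≤ C := by
      rw [abs_neg, abs_mul, hμabs, one_mul]; exact hq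
    set N : ℝ := ‖F x‖ with hNdef
    have hN0 : (0 : ℝ) ≤ N := norm_nonneg _
    have habs : ∀ i, |F x i| ≤ N := fun i => by
      simpa [Real.norm_eq_abs] using norm_le_pi_norm (F x) i
    refine (pi_norm_le_iff_of_nonneg (by positivity)).2 ?_
    intro i
    fin_cases i
    · show |(ψ0 x).re * (F x 4 - F x 3) + (ψ0 x).im * F x 2 + A0 x * F x 1| ≤ 4 * C * N
      have h1 : |(ψ0 x).re * (F x 4 - F x 3)| ≤ C * (N + N) :=
        abs_mul_le' hp ((abs_sub _ _).trans (add_le_add (habs 4) (habs 3)))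
      have h2 : |(ψ0 x).im * F x 2| ≤ C * N := abs_mul_le' hq (habs 2)
      have h3 : |A0 x * F x 1| ≤ C * N := abs_mul_le' hA (habs 1)
      have t1 := abs_add_le ((ψ0 x).re * (F x 4 - F x 3) + (ψ0 x).im * F x 2) (A0 x * F x 1)
      have t2 := abs_add_le ((ψ0 x).re * (F x 4 - F x 3)) ((ψ0 x).im * F x 2)
      nlinarith
    · show |(ψ0 x).im * (F x 5 - F x 3) + (ψ0 x).re * F x 2 - A0 x * F x 0| ≤ 4 * C * N
      have h1 : |(ψ0 x).im * (F x 5 - F x 3)| ≤ C * (N + N) :=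
        abs_mul_le' hq ((abs_sub _ _).trans (add_le_add (habs 5) (habs 3)))
      have h2 : |(ψ0 x).re * F x 2| ≤ C * N := abs_mul_le' hp (habs 2)
      have h3 : |A0 x * F x 0| ≤ C * N := abs_mul_le' hA (habs 0)
      have t1 := abs_sub ((ψ0 x).im * (F x 5 - F x 3) + (ψ0 x).re * F x 2) (A0 x * F x 0)
      have t2 := abs_add_le ((ψ0 x).im * (F x 5 - F x 3)) ((ψ0 x).re * F x 2)
      nlinarith
    · show |(-(μ * (ψ0 x).re)) * F x 1 - (μ * (ψ0 x).im) * F x 0 +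
          A0 x * (F x 5 - F x 4)| ≤ 4 * C * N
      have h1 : |(-(μ * (ψ0 x).re)) * F x 1| ≤ C * N := abs_mul_le' hμp (habs 1)
      have h2 : |(μ * (ψ0 x).im) * F x 0| ≤ C * N := by
        have hh : |μ * (ψ0 x).im| ≤ C := by rw [abs_mul, hμabs, one_mul]; exact hq
        exact abs_mul_le' hh (habs 0)
      have h3 : |A0 x * (F x 5 - F x 4)| ≤ C * (N + N) :=
        abs_mul_le' hA ((abs_sub _ _).trans (add_le_add (habs 5) (habs 4)))
      have t1 := abs_add_le ((-(μ * (ψ0 x).re)) * F x 1 - (μ * (ψ0 x).im) * F x 0)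
        (A0 x * (F x 5 - F x 4))
      have t2 := abs_sub ((-(μ * (ψ0 x).re)) * F x 1) ((μ * (ψ0 x).im) * F x 0)
      nlinarith
    · show |2 * μ * ((ψ0 x).re * F x 0 + (ψ0 x).im * F x 1)| ≤ 4 * C * N
      have h1 : |(ψ0 x).re * F x 0| ≤ C * N := abs_mul_le' hp (habs 0)
      have h2 : |(ψ0 x).im * F x 1| ≤ C * N := abs_mul_le' hq (habs 1)
      have t1 := abs_add_le ((ψ0 x).re * F x 0) ((ψ0 x).im * F x 1)
      have h2μ : |2 * μ| = 2 := by rw [abs_mul, hμabs]; norm_num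
      rw [abs_mul, h2μ]
      nlinarith
    · show |2 * (-(μ * (ψ0 x).re) * F x 0 + A0 x * F x 2)| ≤ 4 * C * N
      have h1 : |(-(μ * (ψ0 x).re)) * F x 0| ≤ C * N := abs_mul_le' hμp (habs 0)
      have h2 : |A0 x * F x 2| ≤ C * N := abs_mul_le' hA (habs 2)
      have t1 := abs_add_le ((-(μ * (ψ0 x).re)) * F x 0) (A0 x * F x 2)
      rw [abs_mul, show |(2 : ℝ)| = 2 by norm_num]
      nlinarith
    · show |2 * (-(μ * (ψ0 x).im) * F x 1 - A0 x * F x 2)| ≤ 4 * C * N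
      have h1 : |(-(μ * (ψ0 x).im)) * F x 1| ≤ C * N := abs_mul_le' hμq (habs 1)
      have h2 : |A0 x * F x 2| ≤ C * N := abs_mul_le' hA (habs 2)
      have t1 := abs_sub ((-(μ * (ψ0 x).im)) * F x 1) (A0 x * F x 2)
      rw [abs_mul, show |(2 : ℝ)| = 2 by norm_num]
      nlinarith
  have main : ∀ u ∈ I, F u = 0 := by
    intro u hu
    rcases le_total 0 u with h | h
    · have hsub : Icc (0 : ℝ) u ⊆ I := hIconv.ordConnected.out h0I hu
      obtain ⟨K, hK0, hK⟩ := keybound (Icc 0 u) isCompact_Icc hsub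
      have hg := norm_le_gronwallBound_of_norm_deriv_right_le (f := F) (f' := G)
        (δ := 0) (K := K) (ε := 0) (a := 0) (b := u)
        (hFcont.mono hsub)
        (fun x hx => (hF x (hsub (Ico_subset_Icc_self hx))).hasDerivWithinAt)
        (by simp [hF0])
        (fun x hx => by rw [add_zero]; exact hK x (Ico_subset_Icc_self hx))
        u (right_mem_Icc.2 h)
      rw [gronwallBound_ε0_δ0] at hg
      exact norm_le_zero_iff.1 hg
    · have hsub : Icc u (0 : ℝ) ⊆ I := hIconv.ordConnected.out hu h0I
      obtain ⟨K, hK0, hK⟩ := keybound (Icc u 0) isCompact_Icc hsub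
      have hmem : ∀ r ∈ Icc (0 : ℝ) (-u), -r ∈ Icc u (0 : ℝ) := by
        intro r hr
        exact ⟨by linarith [hr.2], by linarith [hr.1]⟩
      have hcont : ContinuousOn (fun r => F (-r)) (Icc 0 (-u)) :=
        (hFcont.mono hsub).comp continuous_neg.continuousOn hmem
      have hderiv : ∀ r ∈ Ico (0 : ℝ) (-u),
          HasDerivWithinAt (fun r => F (-r)) (-(G (-r))) (Ici r) r := by
        intro r hr
        have hrI : -r ∈ I := hsub (hmem r (Ico_subset_Icc_self hr))
        have h2 : HasDerivAt (fun r : ℝ => F (-r)) (-(G (-r))) r := by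
          have h3 := (hF (-r) hrI).scomp r (hasDerivAt_neg r)
          simp only [neg_one_smul] at h3
          exact h3
        exact h2.hasDerivWithinAt
      have hg := norm_le_gronwallBound_of_norm_deriv_right_le
        (f := fun r => F (-r)) (f' := fun r => -(G (-r)))
        (δ := 0) (K := K) (ε := 0) (a := 0) (b := -u)
        hcont hderiv (by simp [hF0])
        (fun x hx => by
          rw [add_zero, norm_neg]
          exact hK (-x) (hmem x (Ico_subset_Icc_self hx)))
        (-u) (right_mem_Icc.2 (by linarith))
      rw [gronwallBound_ε0_δ0] at hg
      have h0 := norm_le_zero_iff.1 hg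
      simpa using h0
  intro t ht
  have hFt := main t ht
  have h0 : mdot μ (v t) (s t) = 0 := congrFun hFt 0
  have h1 : mdot μ (w t) (s t) = 0 := congrFun hFt 1
  have h2 : mdot μ (v t) (w t) = 0 := congrFun hFt 2
  have h3 : μ * mdot μ (s t) (s t) - 1 = 0 := congrFun hFt 3
  have h4 : mdot μ (v t) (v t) - 1 = 0 := congrFun hFt 4
  have h5 : mdot μ (w t) (w t) - 1 = 0 := congrFun hFt 5
  exact ⟨h0, h1, h2, by linarith, by linarith, by linarith⟩
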